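/- Under the interference-alignment hypotheses, if l = r (the scalar MSR scenario with independent repair subspaces), then k ≤ r + 1. -/
import Mathlib


open Finset Classical in

theorem msr_core {𝔽 : Type*} [Field 𝔽] {k l : ℕ} (hl2 : 2 ≤ l)
    (v : Fin k → (Fin l → 𝔽))
    (C : Fin l → Fin k → Matrix (Fin l) (Fin l) 𝔽)
    (heig : ∀ i j : Fin k, j ≠ i → ∀ u : Fin l, ∃ μ : 𝔽,
      Matrix.vecMul (v i) (C u j) = μ • v i)
    (hkey : ∀ (i : Fin k) (u : Fin l), (u : ℕ) ≠ 0 → ∀ μ : 𝔽,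
      Matrix.vecMul (v i) (C u i) ≠ μ • v i)
    (hspan : ∀ i : Fin k, (⊤ : Submodule 𝔽 (Fin l → 𝔽)) ≤
      ⨆ u : Fin l, Submodule.span 𝔽 {Matrix.vecMul (v i) (C u i)}) :
    k ≤ l + 1 := by
  by_contra hk
  push_neg at hk
  -- not linearly independent
  have hfr : Module.finrank 𝔽 (Fin l → 𝔽) = l := Module.finrank_fin_fun 𝔽
  have hnotli : ¬ LinearIndependent 𝔽 v := by
    intro h
    have := h.fintype_card_le_finrank
    rw [hfr, Fintype.card_fin] at this
    omega
  obtain ⟨g0, hg0sum, i0', hg0ne⟩ := Fintype.not_linearIndependent_iff.mp hnotli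
  -- minimal support dependence
  set P : ℕ → Prop := fun n => ∃ g : Fin k → 𝔽, (∑ i, g i • v i = 0) ∧
    (∃ i, g i ≠ 0) ∧ (Finset.univ.filter fun i => g i ≠ 0).card = n with hP
  have hPex : ∃ n, P n := ⟨_, g0, hg0sum, ⟨i0', hg0ne⟩, rfl⟩
  obtain ⟨g, hgsum, hgne, hgcard⟩ := Nat.find_spec hPex
  have hmin : ∀ g' : Fin k → 𝔽, (∑ i, g' i • v i = 0) →
      (Finset.univ.filter fun i => g' i ≠ 0) ⊂ (Finset.univ.filter fun i => g i ≠ 0) →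
      g' = 0 := by
    intro g' hsum hss
    by_contra hne
    have hne' : ∃ i, g' i ≠ 0 := by
      by_contra h
      push_neg at h
      exact hne (funext fun i => h i)
    have hlt : (Finset.univ.filter fun i => g' i ≠ 0).card < Nat.find hPex := by
      rw [← hgcard]
      exact Finset.card_lt_card hss
    exact Nat.find_min hPex hlt ⟨g', hsum, hne', rfl⟩
  obtain ⟨a, hga⟩ := hgne
  have haA : a ∈ Finset.univ.filter fun i => g i ≠ 0 := by simp [hga]
  -- the vectors on the support minus a are linearly independent
  set T : Finset (Fin k) := (Finset.univ.filter fun i => g i ≠ 0).erase a with hT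
  have hli : LinearIndependent 𝔽 (fun x : T => v x) := by
    rw [Fintype.linearIndependent_iff]
    intro c hc x
    set g'' : Fin k → 𝔽 := fun i => if h : i ∈ T then c ⟨i, h⟩ else 0 with hg''
    have hsum'' : ∑ i, g'' i • v i = 0 := by
      rw [← Finset.sum_subset (Finset.subset_univ T)
        (fun i _ hi => by simp [hg'', hi])]
      rw [← Finset.sum_attach T (fun i => g'' i • v i)]
      rw [← hc]
      rw [Finset.univ_eq_attach]
      refine Finset.sum_congr rfl fun x _ => ?_
      simp [hg'', x.2]
    have hzz : g'' = 0 := by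
      apply hmin g'' hsum''
      have hsub : (Finset.univ.filter fun i => g'' i ≠ 0) ⊆ T := by
        intro i hi
        simp only [Finset.mem_filter, Finset.mem_univ, true_and] at hi
        by_contra h
        exact hi (by simp [hg'', h])
      exact Finset.ssubset_of_subset_of_ssubset hsub (Finset.erase_ssubset haA)
    have := congrFun hzz x.1
    simpa [hg'', x.2] using this
  -- card bound and a node outside the support
  have hcard : (Finset.univ.filter fun i => g i ≠ 0).card ≤ l + 1 := by
    have h1 := hli.fintype_card_le_finrank
    rw [hfr, Fintype.card_coe] at h1
    have h2 : T.card = (Finset.univ.filter fun i => g i ≠ 0).card - 1 :=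
      Finset.card_erase_of_mem haA
    have h3 : 0 < (Finset.univ.filter fun i => g i ≠ 0).card :=
      Finset.card_pos.mpr ⟨a, haA⟩
    omega
  obtain ⟨j, hj⟩ : ∃ j : Fin k, g j = 0 := by
    by_contra h
    push_neg at h
    have : (Finset.univ.filter fun i => g i ≠ 0) = Finset.univ :=
      Finset.eq_univ_iff_forall.mpr (fun i => by simp [h i])
    rw [this, Finset.card_univ, Fintype.card_fin] at hcard
    omega
  have hjne : ∀ i : Fin k, g i ≠ 0 → j ≠ i := by
    rintro i hgi rfl
    exact hgi hj
  -- common eigenvalue of C u j on the support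
  have hcommon : ∀ u : Fin l, ∃ c : 𝔽, ∀ i, g i ≠ 0 →
      Matrix.vecMul (v i) (C u j) = c • v i := by
    intro u
    have hex : ∀ i, ∃ μ : 𝔽, g i ≠ 0 → Matrix.vecMul (v i) (C u j) = μ • v i := by
      intro i
      by_cases hgi : g i ≠ 0
      · obtain ⟨μ, hμ⟩ := heig i j (hjne i hgi) u
        exact ⟨μ, fun _ => hμ⟩
      · exact ⟨0, fun h => absurd h hgi⟩
    choose μ hμ using hex
    refine ⟨μ a, fun i hgi => ?_⟩
    set g' : Fin k → 𝔽 := fun i => g i * (μ i - μ a) with hg'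
    have hsum' : ∑ i, g' i • v i = 0 := by
      have e1 : ∀ i : Fin k, g' i • v i =
          g i • (Matrix.vecMul (v i) (C u j)) - (μ a * g i) • v i := by
        intro i
        by_cases hgi : g i ≠ 0
        · rw [hμ i hgi, hg']
          simp only [smul_smul, ← sub_smul]
          ring_nf
        · push_neg at hgi
          simp [hg', hgi]
      rw [Finset.sum_congr rfl (fun i _ => e1 i), Finset.sum_sub_distrib]
      have hA : ∑ i, g i • Matrix.vecMul (v i) (C u j) = 0 := by
        have : ∑ i, g i • Matrix.vecMul (v i) (C u j)
            = Matrix.vecMul (∑ i, g i • v i) (C u j) := by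
          simp only [← Matrix.vecMulLinear_apply, ← map_smul, ← map_sum]
        rw [this, hgsum, Matrix.zero_vecMul]
      have hB : ∑ i, (μ a * g i) • v i = 0 := by
        have : ∑ i, (μ a * g i) • v i = μ a • ∑ i, g i • v i := by
          rw [Finset.smul_sum]
          exact Finset.sum_congr rfl fun i _ => by rw [smul_smul]
        rw [this, hgsum, smul_zero]
      rw [hA, hB, sub_zero]
    have hss : (Finset.univ.filter fun i => g' i ≠ 0) ⊂
        (Finset.univ.filter fun i => g i ≠ 0) := by
      rw [Finset.ssubset_iff_of_subset]
      · exact ⟨a, haA, by simp [hg']⟩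
      · intro i hi
        simp only [Finset.mem_filter, Finset.mem_univ, true_and, hg'] at hi ⊢
        exact fun h => hi (by rw [h, zero_mul])
    have hz := congrFun (hmin g' hsum' hss) i
    simp only [hg', Pi.zero_apply, mul_eq_zero] at hz
    rcases hz with h | h
    · exact absurd h hgi
    · rw [hμ i hgi, sub_eq_zero.mp h]
  -- the support vectors span everything
  set W : Submodule 𝔽 (Fin l → 𝔽) :=
    Submodule.span 𝔽 {w | ∃ i, g i ≠ 0 ∧ w = v i} with hW
  have hWmem : ∀ i, g i ≠ 0 → v i ∈ W :=
    fun i hi => Submodule.subset_span ⟨i, hi, rfl⟩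
  have hWva : ∀ u : Fin l, Matrix.vecMul (v a) (C u a) ∈ W := by
    intro u
    have hsplit : g a • v a = - ∑ i ∈ Finset.univ.erase a, g i • v i := by
      rw [← Finset.add_sum_erase _ _ (Finset.mem_univ a)] at hgsum
      exact eq_neg_of_add_eq_zero_left hgsum
    have h2 : g a • Matrix.vecMul (v a) (C u a)
        = - ∑ i ∈ Finset.univ.erase a, g i • Matrix.vecMul (v i) (C u a) := by
      have := congrArg (Matrix.vecMulLinear (C u a)) hsplit
      simpa only [map_smul, map_neg, map_sum, Matrix.vecMulLinear_apply] using this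
    have h3 : Matrix.vecMul (v a) (C u a)
        = (g a)⁻¹ • (- ∑ i ∈ Finset.univ.erase a, g i • Matrix.vecMul (v i) (C u a)) := by
      rw [← h2, smul_smul, inv_mul_cancel₀ hga, one_smul]
    rw [h3]
    refine W.smul_mem _ (W.neg_mem (Submodule.sum_mem _ fun i hi => ?_))
    by_cases hgi : g i = 0
    · simp [hgi]
    · have hia : a ≠ i := fun h => (Finset.mem_erase.mp hi).1 h.symm
      obtain ⟨μ', hμ'⟩ := heig i a hia u
      rw [hμ']
      exact W.smul_mem _ (W.smul_mem _ (hWmem i hgi))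
  have hWtop : (⊤ : Submodule 𝔽 (Fin l → 𝔽)) ≤ W := by
    refine le_trans (hspan a) (iSup_le fun u => ?_)
    rw [Submodule.span_singleton_le_iff_mem]
    exact hWva u
  -- conclude
  have hone : (1 : ℕ) < l := by omega
  obtain ⟨c, hc⟩ := hcommon ⟨1, hone⟩
  have hfinal : Matrix.vecMul (v j) (C ⟨1, hone⟩ j) = c • v j := by
    set L : (Fin l → 𝔽) →ₗ[𝔽] (Fin l → 𝔽) :=
      Matrix.vecMulLinear (C ⟨1, hone⟩ j) - c • LinearMap.id with hL
    have hker : W ≤ LinearMap.ker L := by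
      rw [hW, Submodule.span_le]
      rintro w ⟨i, hgi, rfl⟩
      simp only [SetLike.mem_coe, LinearMap.mem_ker, hL, LinearMap.sub_apply,
        Matrix.vecMulLinear_apply, LinearMap.smul_apply, LinearMap.id_apply]
      rw [hc i hgi, sub_self]
    have := hker (hWtop (Submodule.mem_top (x := v j)))
    simp only [LinearMap.mem_ker, hL, LinearMap.sub_apply,
      Matrix.vecMulLinear_apply, LinearMap.smul_apply, LinearMap.id_apply] at this
    exact sub_eq_zero.mp this
  exact hkey j ⟨1, hone⟩ (by simp) c hfinal


lemma aux_range_row {𝔽 : Type*} {m l : ℕ} (hm : m = 1)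
    (M : Matrix (Fin m) (Fin l) 𝔽) :
    Set.range M = {M ⟨0, by omega⟩} := by
  subst hm
  ext w
  constructor
  · rintro ⟨x, rfl⟩
    have : x = ⟨0, by omega⟩ := by
      ext
      omega
    rw [this]
    rfl
  · rintro rfl
    exact ⟨_, rfl⟩

lemma aux_row_mul {𝔽 : Type*} [Field 𝔽] {m l : ℕ}
    (M : Matrix (Fin m) (Fin l) 𝔽) (D : Matrix (Fin l) (Fin l) 𝔽) (x : Fin m) :
    (M * D) x = Matrix.vecMul (M x) D := by
  funext j
  simp [Matrix.mul_apply, Matrix.vecMul, dotProduct]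


theorem stmt_5 {𝔽 : Type*} [Field 𝔽] (k r l : ℕ)
    (hk : 0 < k) (hr : 2 ≤ r) (hl : 0 < l) (hrl : r ∣ l)
    (S : Fin k → Matrix (Fin (l / r)) (Fin l) 𝔽)
    (C : Fin r → Fin k → Matrix (Fin l) (Fin l) 𝔽)
    (hCinv : ∀ u j, IsUnit (C u j))
    (hC1 : ∀ j, C ⟨0, by omega⟩ j = 1)
    (hIA1 : ∀ (i j : Fin k), j ≠ i → ∀ u : Fin r,
      Submodule.span 𝔽 (Set.range (S i * C u j)) = Submodule.span 𝔽 (Set.range (S i)))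
    (hIA2 : ∀ i : Fin k, iSupIndep
      fun u : Fin r => Submodule.span 𝔽 (Set.range (S i * C u i)))
    (hIA3 : ∀ i : Fin k,
      (⨆ u : Fin r, Submodule.span 𝔽 (Set.range (S i * C u i))) = ⊤)
    (hlr : l = r) :
    k ≤ r + 1 := by
  subst hlr
  have hβ : l / l = 1 := Nat.div_self hl
  have hlt : 0 < l / l := by omega
  set v : Fin k → (Fin l → 𝔽) := fun i => S i ⟨0, hlt⟩ with hv
  -- rewrite spans as spans of single rows
  have hrange : ∀ (i : Fin k) (D : Matrix (Fin l) (Fin l) 𝔽),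
      Submodule.span 𝔽 (Set.range (S i * D))
        = Submodule.span 𝔽 {Matrix.vecMul (v i) D} := by
    intro i D
    rw [aux_range_row hβ]
    congr 1
  have hrangeS : ∀ i : Fin k,
      Submodule.span 𝔽 (Set.range (S i)) = Submodule.span 𝔽 {v i} := by
    intro i
    rw [aux_range_row hβ]
  -- nonzero rows
  have hne0 : ∀ i, v i ≠ 0 := by
    intro i h
    have h3 := hIA3 i
    have : ∀ u : Fin l, Submodule.span 𝔽 (Set.range (S i * C u i))
        = (⊥ : Submodule 𝔽 (Fin l → 𝔽)) := by
      intro u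
      rw [hrange i (C u i), h, Matrix.zero_vecMul]
      exact Submodule.span_zero_singleton 𝔽
    rw [iSup_congr this, iSup_bot] at h3
    have hw : (fun _ => (1:𝔽) : Fin l → 𝔽) ∈ (⊤ : Submodule 𝔽 (Fin l → 𝔽)) := trivial
    rw [← h3, Submodule.mem_bot] at hw
    exact one_ne_zero (congrFun hw ⟨0, hl⟩)
  -- eigenvector property
  have heig : ∀ i j : Fin k, j ≠ i → ∀ u : Fin l, ∃ μ : 𝔽,
      Matrix.vecMul (v i) (C u j) = μ • v i := by
    intro i j hne u
    have h := hIA1 i j hne u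
    rw [hrange i (C u j), hrangeS i] at h
    have hmem : Matrix.vecMul (v i) (C u j) ∈ Submodule.span 𝔽 {v i} := by
      rw [← h]
      exact Submodule.mem_span_singleton_self _
    obtain ⟨μ, hμ⟩ := Submodule.mem_span_singleton.mp hmem
    exact ⟨μ, hμ.symm⟩
  -- own encoding matrix never fixes the line
  have hkey : ∀ (i : Fin k) (u : Fin l), (u : ℕ) ≠ 0 → ∀ μ : 𝔽,
      Matrix.vecMul (v i) (C u i) ≠ μ • v i := by
    intro i u hu μ h
    have hind := hIA2 i
    have hfun : (fun u : Fin l => Submodule.span 𝔽 (Set.range (S i * C u i)))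
        = fun u : Fin l => Submodule.span 𝔽 {Matrix.vecMul (v i) (C u i)} :=
      funext fun u => hrange i (C u i)
    rw [hfun] at hind
    have hu0 : (0 : ℕ) < l := hl
    set u0 : Fin l := ⟨0, hu0⟩ with hu0def
    have hC0 : C u0 i = 1 := hC1 i
    have hvu0 : Matrix.vecMul (v i) (C u0 i) = v i := by
      rw [hC0, Matrix.vecMul_one]
    have hd := iSupIndep_def.mp hind u
    have hle : Submodule.span 𝔽 {Matrix.vecMul (v i) (C u i)}
        ≤ Submodule.span 𝔽 {Matrix.vecMul (v i) (C u0 i)} := by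
      rw [Submodule.span_singleton_le_iff_mem, h, hvu0]
      exact Submodule.smul_mem _ _ (Submodule.mem_span_singleton_self _)
    have hne' : u0 ≠ u := by
      intro hh
      rw [hu0def] at hh
      apply hu
      rw [← hh]
    have hle2 : Submodule.span 𝔽 {Matrix.vecMul (v i) (C u0 i)}
        ≤ ⨆ (w : Fin l) (_ : w ≠ u), Submodule.span 𝔽 {Matrix.vecMul (v i) (C w i)} :=
      le_iSup₂ (f := fun (w : Fin l) (_ : w ≠ u) =>
        Submodule.span 𝔽 {Matrix.vecMul (v i) (C w i)}) u0 hne'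
    have hbot := hd.eq_bot_of_le (le_trans hle hle2)
    have hmem : Matrix.vecMul (v i) (C u i) ∈
        Submodule.span 𝔽 {Matrix.vecMul (v i) (C u i)} :=
      Submodule.mem_span_singleton_self _
    rw [hbot, Submodule.mem_bot] at hmem
    -- now v i ᵥ* C u i = 0 forces v i = 0
    obtain ⟨U, hU⟩ := hCinv u i
    have : v i = 0 := by
      have h1 : Matrix.vecMul (Matrix.vecMul (v i) (C u i))
          ((U⁻¹ : (Matrix (Fin l) (Fin l) 𝔽)ˣ) : Matrix (Fin l) (Fin l) 𝔽) = 0 := by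
        rw [hmem, Matrix.zero_vecMul]
      rw [Matrix.vecMul_vecMul, ← hU, Units.mul_inv, Matrix.vecMul_one] at h1
      exact h1
    exact hne0 i this
  -- spanning
  have hspan : ∀ i : Fin k, (⊤ : Submodule 𝔽 (Fin l → 𝔽)) ≤
      ⨆ u : Fin l, Submodule.span 𝔽 {Matrix.vecMul (v i) (C u i)} := by
    intro i
    have h3 := hIA3 i
    rw [iSup_congr (fun u => hrange i (C u i))] at h3
    exact h3.ge
  exact msr_core hr v C heig hkey hspan
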